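/- With ω± as above, for all (x,y) ∈ R_a \ {(2,0)} with 0 < a ≤ 1/10, |∂ω±/∂y| < 7/3, and for y ≠ 0, sign(∂ω₊/∂y) = sign(y) and sign(∂ω₋/∂y) = −sign(y). -/

import Mathlib

set_option maxHeartbeats 4000000

noncomputable def Delta (x y : ℝ) : ℝ := ((x+2)^2 + 8*x^2*y^2) * ((x-2)^2 + 8*x^2*y^2)
noncomputable def r1sq (x y : ℝ) : ℝ := 4 + x^2 + 4*x^2*y^2

noncomputable def omegaP (x y : ℝ) : ℝ := (-4 + x^2 + Real.sqrt (Delta x y)) / (2 * r1sq x y)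
noncomputable def omegaM (x y : ℝ) : ℝ := (-4 + x^2 - Real.sqrt (Delta x y)) / (2 * r1sq x y)

lemma hasDerivAt_Delta (x y : ℝ) :
    HasDerivAt (fun t => Delta x t) (16*x^2*y*(2*x^2+8+16*x^2*y^2)) y := by
  have h1 : HasDerivAt (fun t : ℝ => (x+2)^2 + 8*x^2*t^2) (16*x^2*y) y := by
    have := ((hasDerivAt_pow 2 y).const_mul (8*x^2)).const_add ((x+2)^2)
    exact this.congr_deriv (by push_cast; ring)
  have h2 : HasDerivAt (fun t : ℝ => (x-2)^2 + 8*x^2*t^2) (16*x^2*y) y := by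
    have := ((hasDerivAt_pow 2 y).const_mul (8*x^2)).const_add ((x-2)^2)
    exact this.congr_deriv (by push_cast; ring)
  have h := h1.mul h2
  exact h.congr_deriv (by ring)

lemma hasDerivAt_r1sq (x y : ℝ) :
    HasDerivAt (fun t => r1sq x t) (8*x^2*y) y := by
  have := ((hasDerivAt_pow 2 y).const_mul (4*x^2)).const_add (4 + x^2)
  exact this.congr_deriv (by push_cast; ring)

lemma r1sq_pos (x y : ℝ) : 0 < r1sq x y := by
  unfold r1sq; nlinarith [sq_nonneg x, sq_nonneg (x*y)]

lemma r1sq_lower (x y : ℝ) (h : 361/100 ≤ x^2) : 761/100 ≤ r1sq x y := by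
  unfold r1sq; nlinarith [sq_nonneg (x*y)]

lemma deriv_omegaP (x y : ℝ) (hΔ : 0 < Delta x y) :
    deriv (fun t => omegaP x t) y =
      4*x^2*y/((r1sq x y)^2 * Real.sqrt (Delta x y)) *
        ((4-x^2)*Real.sqrt (Delta x y) + (16+24*x^2+x^4+32*x^2*y^2+8*x^4*y^2)) := by
  have hR : 0 < r1sq x y := r1sq_pos x y
  have hs : 0 < Real.sqrt (Delta x y) := Real.sqrt_pos.2 hΔ
  have hsD := (hasDerivAt_Delta x y).sqrt hΔ.ne'
  have hN : HasDerivAt (fun t => -4 + x^2 + Real.sqrt (Delta x t))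
      (16*x^2*y*(2*x^2+8+16*x^2*y^2) / (2 * Real.sqrt (Delta x y))) y := hsD.const_add _
  have hDen : HasDerivAt (fun t => 2 * r1sq x t) (2*(8*x^2*y)) y :=
    (hasDerivAt_r1sq x y).const_mul 2
  have hden_ne : 2 * r1sq x y ≠ 0 := by positivity
  have hdiv := hN.div hDen hden_ne
  have heq : (fun t => omegaP x t)
      = fun t => (-4 + x^2 + Real.sqrt (Delta x t)) / (2 * r1sq x t) := rfl
  rw [heq, (hdiv : HasDerivAt (fun t => _ / _) _ y).deriv]
  set s := Real.sqrt (Delta x y) with hsdef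
  have hs2 : s^2 = Delta x y := Real.sq_sqrt hΔ.le
  have hpoly : (2*x^2+8+16*x^2*y^2) * (r1sq x y) - s^2
      = 16+24*x^2+x^4+32*x^2*y^2+8*x^4*y^2 := by
    rw [hs2]; unfold r1sq Delta; ring
  rw [← hpoly]
  field_simp
  ring

lemma deriv_omegaM (x y : ℝ) (hΔ : 0 < Delta x y) :
    deriv (fun t => omegaM x t) y =
      4*x^2*y/((r1sq x y)^2 * Real.sqrt (Delta x y)) *
        ((4-x^2)*Real.sqrt (Delta x y) - (16+24*x^2+x^4+32*x^2*y^2+8*x^4*y^2)) := by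
  have hR : 0 < r1sq x y := r1sq_pos x y
  have hs : 0 < Real.sqrt (Delta x y) := Real.sqrt_pos.2 hΔ
  have hsD := (hasDerivAt_Delta x y).sqrt hΔ.ne'
  have hN : HasDerivAt (fun t => -4 + x^2 - Real.sqrt (Delta x t))
      ((-(16*x^2*y*(2*x^2+8+16*x^2*y^2) / (2 * Real.sqrt (Delta x y))))) y := by
    have := hsD.const_sub (-4 + x^2)
    exact this
  have hDen : HasDerivAt (fun t => 2 * r1sq x t) (2*(8*x^2*y)) y :=
    (hasDerivAt_r1sq x y).const_mul 2
  have hden_ne : 2 * r1sq x y ≠ 0 := by positivity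
  have hdiv := hN.div hDen hden_ne
  have heq : (fun t => omegaM x t)
      = fun t => (-4 + x^2 - Real.sqrt (Delta x t)) / (2 * r1sq x t) := rfl
  rw [heq, (hdiv : HasDerivAt (fun t => _ / _) _ y).deriv]
  set s := Real.sqrt (Delta x y) with hsdef
  have hs2 : s^2 = Delta x y := Real.sq_sqrt hΔ.le
  have hpoly : (2*x^2+8+16*x^2*y^2) * (r1sq x y) - s^2
      = 16+24*x^2+x^4+32*x^2*y^2+8*x^4*y^2 := by
    rw [hs2]; unfold r1sq Delta; ring
  rw [← hpoly]
  field_simp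
  ring

theorem stmt_13 (a : ℝ) (ha0 : 0 < a) (ha : a ≤ 1/10) (x y : ℝ)
    (hx : 2 - a ≤ x ∧ x ≤ 2 + a) (hy : |y| ≤ a/10) (hp : (x, y) ≠ (2, 0)) :
    |deriv (fun t => omegaP x t) y| < 7/3 ∧
    |deriv (fun t => omegaM x t) y| < 7/3 ∧
    (y ≠ 0 →
      Real.sign (deriv (fun t => omegaP x t) y) = Real.sign y ∧
      Real.sign (deriv (fun t => omegaM x t) y) = -Real.sign y) := by
  obtain ⟨hx1, hx2⟩ := hx
  have hxlo : (19:ℝ)/10 ≤ x := by linarith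
  have hxhi : x ≤ (21:ℝ)/10 := by linarith
  have hyabs : |y| ≤ 1/100 := by linarith [hy, ha]
  have hy2 : y^2 ≤ 1/10000 := by
    have := abs_le.1 hyabs; nlinarith [this.1, this.2]
  have hxx : x^2 ≤ 441/100 := by nlinarith
  have hxx' : 361/100 ≤ x^2 := by nlinarith
  have hx2y2 : x^2*y^2 ≤ 441/1000000 := by nlinarith [sq_nonneg y]
  have hΔ : 0 < Delta x y := by
    rcases eq_or_ne y 0 with hy0 | hy0
    · have hx2' : x ≠ 2 := fun h => hp (by simp [h, hy0])
      have h2 : (0:ℝ) < (x-2)^2 := pow_two_pos_of_ne_zero (sub_ne_zero.2 hx2')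
      unfold Delta; subst hy0; nlinarith
    · have hxne : x ≠ 0 := by intro h; rw [h] at hxlo; norm_num at hxlo
      unfold Delta; positivity
  set s := Real.sqrt (Delta x y) with hsdef
  have hs0 : 0 < s := Real.sqrt_pos.2 hΔ
  have hs2 : s^2 = Delta x y := Real.sq_sqrt hΔ.le
  have hΔle : Delta x y ≤ 1/4 := by
    have hA : (x+2)^2 + 8*x^2*y^2 ≤ 17 := by nlinarith
    have hB : (x-2)^2 + 8*x^2*y^2 ≤ 7/500 := by nlinarith
    have hBnn : 0 ≤ (x-2)^2 + 8*x^2*y^2 := by positivity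
    have hm := mul_le_mul hA hB hBnn (by norm_num : (0:ℝ) ≤ 17)
    unfold Delta
    linarith
  have hshi : s ≤ 1/2 := by nlinarith [hs2, hΔle, hs0.le]
  have hc : (400:ℝ) ≤ 8*x^2*(x+2)^2 := by nlinarith
  have hΔge : 400*y^2 ≤ Delta x y := by
    have hA' : (x+2)^2 ≤ (x+2)^2 + 8*x^2*y^2 := by nlinarith [sq_nonneg (x*y)]
    have hB' : 8*x^2*y^2 ≤ (x-2)^2 + 8*x^2*y^2 := by nlinarith [sq_nonneg (x-2)]
    have hm := mul_le_mul hA' hB' (by positivity) (by positivity)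
    have h2 := mul_le_mul_of_nonneg_right hc (sq_nonneg y)
    unfold Delta; nlinarith [hm, h2]
  have hsge : 20 * |y| ≤ s := by
    nlinarith [hs2, hΔge, sq_abs y, hs0.le, abs_nonneg y]
  set P : ℝ := 16+24*x^2+x^4+32*x^2*y^2+8*x^4*y^2 with hPdef
  have hx4 : x^4 ≤ 1945/100 := by nlinarith [hxx, sq_nonneg x]
  have hPle : P ≤ 1415/10 := by
    have h8 : 8*x^4*y^2 = 8*(x^2)*(x^2*y^2) := by ring
    nlinarith [hx2y2, hxx, hx4, sq_nonneg y, mul_le_mul hxx hx2y2 (by positivity) (by norm_num)]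
  have hPge : 16 ≤ P := by nlinarith [sq_nonneg x, sq_nonneg (x^2), sq_nonneg (x*y), sq_nonneg (x^2*y)]
  have habs1 : (4-x^2)*s ≤ 41/200 := by
    have h1 : (4-x^2) ≤ 41/100 := by nlinarith
    nlinarith [mul_le_mul_of_nonneg_right h1 hs0.le, hshi, hs0.le]
  have habs2 : -(41/200) ≤ (4-x^2)*s := by
    have h1 : -(41/100) ≤ (4-x^2) := by nlinarith
    nlinarith [mul_le_mul_of_nonneg_right h1 hs0.le, hshi, hs0.le]
  have hQPpos : 0 < (4-x^2)*s + P := by linarith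
  have hQMneg : (4-x^2)*s - P < 0 := by linarith
  have hQPabs : |(4-x^2)*s + P| ≤ 142 := by
    rw [abs_le]; constructor <;> linarith
  have hQMabs : |(4-x^2)*s - P| ≤ 142 := by
    rw [abs_le]; constructor <;> linarith
  set R : ℝ := r1sq x y with hRdef
  have hR : 0 < R := r1sq_pos x y
  have hRge : 57 ≤ R^2 := by
    have h := r1sq_lower x y hxx'
    rw [← hRdef] at h
    have h2 := pow_le_pow_left₀ (by norm_num : (0:ℝ) ≤ 761/100) h 2
    norm_num at h2
    linarith
  rw [deriv_omegaP x y hΔ, deriv_omegaM x y hΔ]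
  rw [← hsdef, ← hRdef, ← hPdef]
  rcases eq_or_ne y 0 with hy0 | hy0
  · subst hy0
    simp only [mul_zero, zero_mul, zero_div, abs_zero]
    refine ⟨by norm_num, by norm_num, fun h => absurd rfl h⟩
  have hyp : 0 < |y| := abs_pos.2 hy0
  -- generic bound
  have hbound : ∀ Q : ℝ, |Q| ≤ 142 → |4*x^2*y/(R^2*s) * Q| < 7/3 := by
    intro Q hQ
    have hden : 0 < R^2*s := by positivity
    rw [abs_mul, abs_div, abs_of_pos hden, div_mul_eq_mul_div, div_lt_iff₀ hden]
    have habsnum : |4*x^2*y| = 4*x^2*|y| := by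
      rw [abs_mul, abs_of_nonneg (by positivity : (0:ℝ) ≤ 4*x^2)]
    rw [habsnum]
    have h1 : 4*x^2 ≤ 441/25 := by nlinarith
    have h2 : 4*x^2*|y| ≤ 441/25*|y| := mul_le_mul_of_nonneg_right h1 (abs_nonneg y)
    have h3 : 4*x^2*(|y|)*(|Q|) ≤ (441/25*(|y|))*142 :=
      mul_le_mul h2 hQ (abs_nonneg Q) (by positivity)
    have h4 : 57*(20*|y|) ≤ R^2*s :=
      mul_le_mul hRge hsge (by positivity) (by nlinarith)
    nlinarith [h3, h4, hyp]
  refine ⟨hbound _ hQPabs, hbound _ hQMabs, fun _ => ?_⟩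
  have hx0 : (0:ℝ) < x := by linarith
  rcases lt_or_gt_of_ne hy0 with hyn | hypos
  · -- y < 0
    have hcoef : 4*x^2*y/(R^2*s) < 0 := by
      apply div_neg_of_neg_of_pos
      · nlinarith [sq_nonneg x]
      · positivity
    have hEP : 4*x^2*y/(R^2*s) * ((4-x^2)*s + P) < 0 := mul_neg_of_neg_of_pos hcoef hQPpos
    have hEM : 0 < 4*x^2*y/(R^2*s) * ((4-x^2)*s - P) := mul_pos_of_neg_of_neg hcoef hQMneg
    rw [Real.sign_of_neg hEP, Real.sign_of_pos hEM, Real.sign_of_neg hyn]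
    norm_num
  · -- y > 0
    have hcoef : 0 < 4*x^2*y/(R^2*s) := by positivity
    have hEP : 0 < 4*x^2*y/(R^2*s) * ((4-x^2)*s + P) := mul_pos hcoef hQPpos
    have hEM : 4*x^2*y/(R^2*s) * ((4-x^2)*s - P) < 0 := mul_neg_of_pos_of_neg hcoef hQMneg
    rw [Real.sign_of_pos hEP, Real.sign_of_neg hEM, Real.sign_of_pos hypos]
    norm_num
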